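/- Let F ∈ C²[0,∞) satisfy the energy conditions F' ≤ 0, 2xF' - 2F + 1 ≥ 0, and -x²F'' + 2xF' - 2F + 1 ≥ 0 on (0,∞). Suppose 0 < x_i < 1, F_i := F(x_i) > 0, and |F'(x_i)| > max{1/(4x_i), F_i/x_i}. Then F(x) < 1/x for all x ∈ [x_i, 2x_i], and F(2x_i) < 0; in particular there exists x₀ ∈ (x_i, 2x_i] with F(x₀) = 0 and F(x) < 1/x on [x_i, x₀]. -/

import Mathlib

set_option maxHeartbeats 2000000 in
theorem stmt_18 (F : ℝ → ℝ) (hF : ContDiff ℝ 2 F)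
    (hF' : ∀ x > (0:ℝ), deriv F x ≤ 0)
    (hwec : ∀ x > (0:ℝ), 2*x*deriv F x - 2*F x + 1 ≥ 0)
    (hdec : ∀ x > (0:ℝ),
      -(x^2 * deriv (deriv F) x) + 2*x*deriv F x - 2*F x + 1 ≥ 0)
    (xi : ℝ) (hxi0 : 0 < xi) (hxi1 : xi < 1)
    (hFi : 0 < F xi)
    (hbig : |deriv F xi| > max (1/(4*xi)) (F xi / xi)) :
    (∀ x ∈ Set.Icc xi (2*xi), F x < 1/x) ∧ F (2*xi) < 0 ∧
    ∃ x₀ ∈ Set.Ioc xi (2*xi), F x₀ = 0 ∧ ∀ x ∈ Set.Icc xi x₀, F x < 1/x := by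
  have hq0 : deriv F xi ≤ 0 := hF' xi hxi0
  set p : ℝ := F xi with hp
  set q : ℝ := deriv F xi with hq
  rw [abs_of_nonpos hq0] at hbig
  obtain ⟨hbig1, hbig2⟩ := max_lt_iff.mp hbig
  -- basic consequences
  have hsq1 : xi * q < -(1/4) := by
    have e1 : 1/(4*xi)*(4*xi) = 1 := by field_simp
    nlinarith [mul_lt_mul_of_pos_right hbig1 (show (0:ℝ) < 4*xi by linarith)]
  have hsqp : xi * q < -p := by
    have e1 : p/xi*xi = p := by field_simp
    nlinarith [mul_lt_mul_of_pos_right hbig2 hxi0]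
  have hwxi : 2*xi*q - 2*p + 1 ≥ 0 := hwec xi hxi0
  have hp14 : p < 1/4 := by nlinarith
  -- differentiability
  have hFdiff : Differentiable ℝ F := hF.differentiable (by norm_num)
  have hF2 : ContDiff ℝ (1+1) F := by norm_num; exact hF
  have hF'diff : Differentiable ℝ (deriv F) :=
    (contDiff_succ_iff_deriv.mp hF2).2.2.differentiable (by norm_num)
  have hFd : ∀ x : ℝ, HasDerivAt F (deriv F x) x := fun x => (hFdiff x).hasDerivAt
  have hF'd : ∀ x : ℝ, HasDerivAt (deriv F) (deriv (deriv F) x) x :=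
    fun x => (hF'diff x).hasDerivAt
  -- comparison quadratic h(x) = b x^2 + a x + 1/2
  set a : ℝ := (-(xi*q) + 2*p - 1)/xi with ha
  set b : ℝ := (xi*q - p + 1/2)/xi^2 with hb
  have hax : a * xi = -(xi*q) + 2*p - 1 := by rw [ha]; field_simp
  have hbx : b * xi^2 = xi*q - p + 1/2 := by rw [hb]; field_simp
  have hb3 : b * xi^3 = (xi*q - p + 1/2)*xi := by
    rw [show xi^3 = xi^2*xi by ring, ← mul_assoc, hbx]
  have ha2 : a * xi^2 = (-(xi*q) + 2*p - 1)*xi := by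
    rw [show xi^2 = xi*xi by ring, ← mul_assoc, hax]
  have hbnn : 0 ≤ b := by
    apply div_nonneg _ (by positivity)
    linarith
  -- cubic u(x) = x h(x) - 1
  set u : ℝ → ℝ := fun x => b*x^3 + a*x^2 + x/2 - 1 with hu
  have hu' : ∀ x : ℝ, HasDerivAt u (3*b*x^2 + 2*a*x + 1/2) x := by
    intro x
    have h1 := (hasDerivAt_pow 3 x).const_mul b
    have h2 := (hasDerivAt_pow 2 x).const_mul a
    have h3 := (hasDerivAt_id x).div_const 2
    have h4 := ((h1.add h2).add h3).sub_const 1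
    refine h4.congr_deriv (Eq.symm ?_)
    push_cast
    ring
  have huxi : u xi < 0 := by
    have : u xi = p * xi - 1 := by
      simp only [hu]
      linear_combination hb3 + ha2
    nlinarith
  have hu2xi : u (2*xi) < 0 := by
    have : u (2*xi) = xi*(4*(xi*q) + 1) - 1 := by
      simp only [hu]
      linear_combination (8:ℝ)*hb3 + 4*ha2
    nlinarith
  have hu'xi : 3*b*xi^2 + 2*a*xi + 1/2 < 0 := by
    have he : 3*b*xi^2 + 2*a*xi + 1/2 = xi*q + p := by linear_combination 3*hbx + 2*hax
    linarith
  -- the cubic stays negative on [xi, 2xi]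
  have hucont : Continuous u := by fun_prop
  have huneg : ∀ x ∈ Set.Icc xi (2*xi), u x < 0 := by
    intro x hx
    rcases eq_or_lt_of_le hx.1 with rfl | hlt1
    · exact huxi
    rcases eq_or_lt_of_le hx.2 with heq | hlt2
    · rw [heq]; exact hu2xi
    by_contra hc
    push_neg at hc
    obtain ⟨c₁, hc₁, hs₁⟩ := exists_hasDerivAt_eq_slope u _ hlt1
      hucont.continuousOn (fun y _ => hu' y)
    obtain ⟨c₂, hc₂, hs₂⟩ := exists_hasDerivAt_eq_slope u _ hlt2
      hucont.continuousOn (fun y _ => hu' y)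
    have hq1 : 0 < 3*b*c₁^2 + 2*a*c₁ + 1/2 := by
      rw [hs₁]
      apply div_pos (by linarith) (by linarith [hc₁.1, hc₁.2])
    have hq2 : 3*b*c₂^2 + 2*a*c₂ + 1/2 < 0 := by
      rw [hs₂]
      apply div_neg_of_neg_of_pos (by linarith) (by linarith [hc₂.1, hc₂.2])
    have h12 : c₁ < c₂ := lt_trans hc₁.2 hc₂.1
    have hx1 : xi < c₁ := hc₁.1
    have key : (c₂-c₁)*(3*b*xi^2+2*a*xi+1/2) + (c₁-xi)*(3*b*c₂^2+2*a*c₂+1/2)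
        - (c₂-xi)*(3*b*c₁^2+2*a*c₁+1/2) = 3*b*((c₂-c₁)*((c₁-xi)*(c₂-xi))) := by ring
    have t1 : (c₂-c₁)*(3*b*xi^2+2*a*xi+1/2) < 0 :=
      mul_neg_of_pos_of_neg (by linarith) hu'xi
    have t2 : (c₁-xi)*(3*b*c₂^2+2*a*c₂+1/2) < 0 :=
      mul_neg_of_pos_of_neg (by linarith) hq2
    have t3 : 0 < (c₂-xi)*(3*b*c₁^2+2*a*c₁+1/2) := mul_pos (by linarith) hq1
    have t4 : 0 ≤ 3*b*((c₂-c₁)*((c₁-xi)*(c₂-xi))) := by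
      apply mul_nonneg (by linarith)
      apply mul_nonneg (by linarith)
      apply mul_nonneg (by linarith) (by linarith)
    linarith
  -- F ≤ h on [xi, 2xi] via the DEC
  set G : ℝ → ℝ := fun x => (b*x^2 + a*x + 1/2 - F x)/x with hG
  set G₁ : ℝ → ℝ := fun x => (b*x^2 - deriv F x * x + F x - 1/2)/x^2 with hG1
  have hGd : ∀ x : ℝ, 0 < x → HasDerivAt G (G₁ x) x := by
    intro x hx
    have h1 := (hasDerivAt_pow 2 x).const_mul b
    have h2 := (hasDerivAt_id x).const_mul a
    have hnum : HasDerivAt (fun y => b*y^2 + a*y + 1/2 - F y)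
        (b*(2*x) + a - deriv F x) x := by
      have h4 := ((h1.add h2).add_const (1/2)).sub (hFd x)
      refine h4.congr_deriv (Eq.symm ?_)
      push_cast; ring
    have h5 := hnum.div (hasDerivAt_id x) (ne_of_gt hx)
    refine h5.congr_deriv (Eq.symm ?_)
    simp only [hG1, id_eq]
    field_simp
    ring
  have hG1d : ∀ x : ℝ, 0 < x → HasDerivAt G₁
      ((-(x^2 * deriv (deriv F) x) + 2*x*deriv F x - 2*F x + 1)/x^3) x := by
    intro x hx
    have h1 := (hasDerivAt_pow 2 x).const_mul b
    have hnum : HasDerivAt (fun y => b*y^2 - deriv F y * y + F y - 1/2)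
        (b*(2*x) - (deriv (deriv F) x * x + deriv F x) + deriv F x) x := by
      have h4 := ((h1.sub ((hF'd x).mul (hasDerivAt_id x))).add (hFd x)).sub_const (1/2)
      refine h4.congr_deriv (Eq.symm ?_)
      simp only [id_eq]
      push_cast; ring
    have hden : HasDerivAt (fun y : ℝ => y^2) (2*x) x := by
      simpa using hasDerivAt_pow 2 x
    have h5 := hnum.div hden (by positivity)
    refine h5.congr_deriv (Eq.symm ?_)
    field_simp
    ring
  have hGxi : G xi = 0 := by
    simp only [hG]
    have hnum : b*xi^2 + a*xi + 1/2 - F xi = 0 := by linear_combination hbx + hax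
    rw [hnum, zero_div]
  have hG1xi : G₁ xi = 0 := by
    simp only [hG1]
    have hnum : b*xi^2 - deriv F xi * xi + F xi - 1/2 = 0 := by linear_combination hbx
    rw [hnum, zero_div]
  have hG1nonneg : ∀ x ∈ Set.Icc xi (2*xi), 0 ≤ G₁ x := by
    intro x hx
    rcases eq_or_lt_of_le hx.1 with rfl | hlt1
    · rw [hG1xi]
    have hcont : ContinuousOn G₁ (Set.Icc xi x) := fun y hy =>
      (hG1d y (lt_of_lt_of_le hxi0 hy.1)).continuousAt.continuousWithinAt
    obtain ⟨c, hc, hs⟩ := exists_hasDerivAt_eq_slope G₁ _ hlt1 hcont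
      (fun y hy => hG1d y (lt_trans hxi0 hy.1))
    have hc0 : 0 < c := lt_trans hxi0 hc.1
    have hnn : 0 ≤ (-(c^2 * deriv (deriv F) c) + 2*c*deriv F c - 2*F c + 1)/c^3 :=
      div_nonneg (hdec c hc0) (by positivity)
    rw [hs] at hnn
    rw [hG1xi] at hnn
    have := mul_nonneg hnn (sub_pos.mpr hlt1).le
    rw [div_mul_cancel₀] at this
    · linarith
    · exact ne_of_gt (sub_pos.mpr hlt1)
  have hGnonneg : ∀ x ∈ Set.Icc xi (2*xi), 0 ≤ G x := by
    intro x hx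
    rcases eq_or_lt_of_le hx.1 with rfl | hlt1
    · rw [hGxi]
    have hcont : ContinuousOn G (Set.Icc xi x) := fun y hy =>
      (hGd y (lt_of_lt_of_le hxi0 hy.1)).continuousAt.continuousWithinAt
    obtain ⟨c, hc, hs⟩ := exists_hasDerivAt_eq_slope G _ hlt1 hcont
      (fun y hy => hGd y (lt_trans hxi0 hy.1))
    have hnn : 0 ≤ G₁ c := hG1nonneg c ⟨hc.1.le, le_trans hc.2.le hx.2⟩
    rw [hs] at hnn
    rw [hGxi] at hnn
    have := mul_nonneg hnn (sub_pos.mpr hlt1).le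
    rw [div_mul_cancel₀] at this
    · linarith
    · exact ne_of_gt (sub_pos.mpr hlt1)
  have hFleh : ∀ x ∈ Set.Icc xi (2*xi), F x ≤ b*x^2 + a*x + 1/2 := by
    intro x hx
    have hx0 : 0 < x := lt_of_lt_of_le hxi0 hx.1
    have h1 := mul_nonneg (hGnonneg x hx) hx0.le
    have h2 : G x * x = b*x^2 + a*x + 1/2 - F x := by
      simp only [hG]; field_simp
    rw [h2] at h1
    linarith
  -- Part 1
  have part1 : ∀ x ∈ Set.Icc xi (2*xi), F x < 1/x := by
    intro x hx
    have hx0 : 0 < x := lt_of_lt_of_le hxi0 hx.1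
    have h1 := hFleh x hx
    have h2 := huneg x hx
    have h3 : b*x^3 + a*x^2 + x/2 - 1 < 0 := h2
    rw [lt_div_iff₀ hx0]
    nlinarith
  -- Part 2
  have part2 : F (2*xi) < 0 := by
    have h1 := hFleh (2*xi) ⟨by linarith, le_rfl⟩
    have h2 : b*(2*xi)^2 + a*(2*xi) + 1/2 = 2*(xi*q) + 1/2 := by
      linear_combination 4*hbx + 2*hax
    rw [h2] at h1
    linarith
  refine ⟨part1, part2, ?_⟩
  -- Part 3: IVT
  have hcl : xi < 2*xi := by linarith
  have hivt : (0:ℝ) ∈ Set.Ioo (F (2*xi)) (F xi) := ⟨part2, hFi⟩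
  have := intermediate_value_Ioo' hcl.le hFdiff.continuous.continuousOn
  obtain ⟨x₀, hx₀, hFx₀⟩ := this hivt
  exact ⟨x₀, ⟨hx₀.1, hx₀.2.le⟩, hFx₀, fun x hx =>
    part1 x ⟨hx.1, le_trans hx.2 hx₀.2.le⟩⟩
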